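/- arXiv:2104.08383 — 2 statements merged into one kernel-verified Lean document; each statement's English description precedes it below -/
import Mathlib

section
/- Let b_k(i), b_k(j) ∈ ℝ³ for k = 1,…,K, and define over the standard simplex Δ_K = {c ∈ ℝ^K : c ≥ 0, 𝟏ᵀc = 1} the quantities b_{ij}^{min} = min_{c ∈ Δ_K} ‖Σ_k c_k (b_k(j) − b_k(i))‖ and b_{ij}^{max} = max_{c ∈ Δ_K} ‖Σ_k c_k (b_k(j) − b_k(i))‖. If y(i) = R Σ_k c_k b_k(i) + t + ε(i) and y(j) = R Σ_k c_k b_k(j) + t + ε(j) for some R ∈ SO(3), t ∈ ℝ³, c ∈ Δ_K, with ‖ε(i)‖ ≤ ε and ‖ε(j)‖ ≤ ε, then b_{ij}^{min} − 2ε ≤ ‖y(j) − y(i)‖ ≤ b_{ij}^{max} + 2ε. -/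
open Matrix Finset

noncomputable section

/-- The Euclidean space `ℝ³`. -/
abbrev E3 : Type := EuclideanSpace ℝ (Fin 3)

/-- Action of a `3×3` matrix on a vector of `ℝ³`. -/
def mv (R : Matrix (Fin 3) (Fin 3) ℝ) (v : E3) : E3 := WithLp.toLp 2 (R.mulVec v)

/-- `R ∈ SO(3)`: `RᵀR = I₃` and `det R = 1`. -/
def SO3 (R : Matrix (Fin 3) (Fin 3) ℝ) : Prop := Rᵀ * R = 1 ∧ R.det = 1

lemma mv_norm' (R : Matrix (Fin 3) (Fin 3) ℝ) (hR : Rᵀ * R = 1) (v : E3) :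
    ‖mv R v‖ = ‖v‖ := by
  have hdot : (R *ᵥ v) ⬝ᵥ (R *ᵥ v) = v ⬝ᵥ v := by
    rw [Matrix.dotProduct_mulVec, Matrix.vecMul_mulVec, hR, Matrix.vecMul_one]
  have h1 : ‖mv R v‖ = Real.sqrt ((R *ᵥ v) ⬝ᵥ (R *ᵥ v)) := by
    rw [EuclideanSpace.norm_eq]
    congr 1
    simp [dotProduct, Real.norm_eq_abs, sq_abs, sq]
    rfl
  have h2 : ‖v‖ = Real.sqrt (v ⬝ᵥ v) := by
    rw [EuclideanSpace.norm_eq]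
    congr 1
    simp [dotProduct, Real.norm_eq_abs, sq_abs, sq]
  rw [h1, h2, hdot]

/-- compatibility test with convex-hull distances: with
`b_{ij}^{min}`/`b_{ij}^{max}` the min/max over the standard simplex of
`‖Σₖ cₖ (bₖ(j) − bₖ(i))‖`, any pair of inliers satisfies
`b_{ij}^{min} − 2ε ≤ ‖y(j) − y(i)‖ ≤ b_{ij}^{max} + 2ε`. -/
theorem convex_hull_compatibility_test (N K : ℕ)
    (y : Fin N → E3) (b : Fin K → Fin N → E3) (i j : Fin N)
    (bmin bmax : ℝ)
    (hbmin : bmin = sInf {v : ℝ | ∃ c : Fin K → ℝ, (∀ k, 0 ≤ c k) ∧ ∑ k, c k = 1 ∧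
      v = ‖∑ k, c k • (b k j - b k i)‖})
    (hbmax : bmax = sSup {v : ℝ | ∃ c : Fin K → ℝ, (∀ k, 0 ≤ c k) ∧ ∑ k, c k = 1 ∧
      v = ‖∑ k, c k • (b k j - b k i)‖})
    (R : Matrix (Fin 3) (Fin 3) ℝ) (hR : SO3 R) (t : E3)
    (c : Fin K → ℝ) (hc : (∀ k, 0 ≤ c k) ∧ ∑ k, c k = 1)
    (εi εj : E3) (ε : ℝ)
    (hyi : y i = mv R (∑ k, c k • b k i) + t + εi)
    (hyj : y j = mv R (∑ k, c k • b k j) + t + εj)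
    (hεi : ‖εi‖ ≤ ε) (hεj : ‖εj‖ ≤ ε) :
    bmin - 2 * ε ≤ ‖y j - y i‖ ∧ ‖y j - y i‖ ≤ bmax + 2 * ε := by
  set S := {v : ℝ | ∃ c : Fin K → ℝ, (∀ k, 0 ≤ c k) ∧ ∑ k, c k = 1 ∧
      v = ‖∑ k, c k • (b k j - b k i)‖} with hS
  set w : E3 := ∑ k, c k • (b k j - b k i) with hw
  have hmem : ‖w‖ ∈ S := ⟨c, hc.1, hc.2, rfl⟩
  -- equality of difference
  have hdiff : y j - y i = mv R w + (εj - εi) := by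
    rw [hyi, hyj]
    have hmv : mv R (∑ k, c k • b k j) - mv R (∑ k, c k • b k i) = mv R w := by
      show WithLp.toLp 2 (R *ᵥ _) - WithLp.toLp 2 (R *ᵥ _) = WithLp.toLp 2 (R *ᵥ _)
      rw [← WithLp.toLp_sub, ← Matrix.mulVec_sub]
      congr 1
      rw [hw]
      simp [smul_sub, Finset.sum_sub_distrib]
    rw [← hmv]
    abel
  have hnw : ‖mv R w‖ = ‖w‖ := mv_norm' R hR.1 w
  -- bounds on the set
  have hbdd : BddAbove S := by
    refine ⟨∑ k, ‖b k j - b k i‖, ?_⟩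
    rintro v ⟨c', hc'0, hc'1, rfl⟩
    calc ‖∑ k, c' k • (b k j - b k i)‖ ≤ ∑ k, ‖c' k • (b k j - b k i)‖ :=
          norm_sum_le _ _
      _ ≤ ∑ k, ‖b k j - b k i‖ := by
          apply Finset.sum_le_sum
          intro k _
          rw [norm_smul, Real.norm_eq_abs, abs_of_nonneg (hc'0 k)]
          have hck : c' k ≤ 1 := by
            rw [← hc'1]
            exact Finset.single_le_sum (fun l _ => hc'0 l) (Finset.mem_univ k)
          nlinarith [norm_nonneg (b k j - b k i)]
  have hbelow : BddBelow S := by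
    refine ⟨0, ?_⟩
    rintro v ⟨c', _, _, rfl⟩
    exact norm_nonneg _
  have hmin : bmin ≤ ‖w‖ := hbmin ▸ csInf_le hbelow hmem
  have hmax : ‖w‖ ≤ bmax := hbmax ▸ le_csSup hbdd hmem
  have htri1 : ‖y j - y i‖ ≤ ‖w‖ + 2 * ε := by
    rw [hdiff]
    calc ‖mv R w + (εj - εi)‖ ≤ ‖mv R w‖ + ‖εj - εi‖ := norm_add_le _ _
      _ ≤ ‖w‖ + (‖εj‖ + ‖εi‖) := by rw [hnw]; gcongr; exact norm_sub_le _ _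
      _ ≤ ‖w‖ + 2 * ε := by linarith
  have htri2 : ‖w‖ - 2 * ε ≤ ‖y j - y i‖ := by
    have : ‖w‖ - ‖εj - εi‖ ≤ ‖mv R w + (εj - εi)‖ := by
      have h := norm_add_le (mv R w + (εj - εi)) (-(εj - εi))
      simp only [add_neg_cancel_right, norm_neg] at h
      linarith [hnw ▸ h]
    have h2 : ‖εj - εi‖ ≤ 2 * ε := by
      calc ‖εj - εi‖ ≤ ‖εj‖ + ‖εi‖ := norm_sub_le _ _
        _ ≤ 2 * ε := by linarith
    rw [hdiff]
    linarith
  exact ⟨by linarith, by linarith⟩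


end
end

section
/- Let y(i), b_k(i) ∈ ℝ³ for i = 1,…,N, k = 1,…,K, let w_i > 0 with Σ_i w_i > 0, and λ > 0; define the cost J(R, t, c) = Σ_{i=1}^N w_i ‖y(i) − R Σ_k c_k b_k(i) − t‖² + λ‖c‖² over the feasible set SO(3) × ℝ³ × {c ∈ ℝ^K : 𝟏ᵀc = 1}. With the centered quantities ȳ(i) = √w_i (y(i) − y_w), b̄_k(i) = √w_i(b_k(i) − b_{k,w}) (where y_w, b_{k,w} are the weighted centroids), stacked ȳ ∈ ℝ^{3N} and B̄ ∈ ℝ^{3N×K}, define the reduced rotation cost F(R) = min_{c : 𝟏ᵀc = 1} ‖B̄c − (I_N ⊗ Rᵀ)ȳ‖² + λ‖c‖². If R* ∈ SO(3) globally minimizes F over SO(3), c* = 2G B̄ᵀ(I_N ⊗ (R*)ᵀ)ȳ + g (with G, g built from H̄ = 2(B̄ᵀB̄ + λI_K) as G = H̄⁻¹ − (H̄⁻¹𝟏𝟏ᵀH̄⁻¹)/(𝟏ᵀH̄⁻¹𝟏) and g = (H̄⁻¹𝟏)/(𝟏ᵀH̄⁻¹𝟏)), and t* = y_w − R* Σ_k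 c*_k b_{k,w}, then (R*, t*, c*) is a global minimizer of J over SO(3) × ℝ³ × {c : 𝟏ᵀc = 1}. -/
open Matrix Finset Kronecker

noncomputable section

/-- View a plain tuple as a point of Euclidean space (so that `‖·‖` is the Euclidean norm). -/
def toE {ι : Type} [Fintype ι] (v : ι → ℝ) : EuclideanSpace ℝ ι := WithLp.toLp 2 v

/-- Entry of a vector of `ℝ³`. -/
def entry (v : E3) (a : Fin 3) : ℝ := v a

/-- The regularized nonlinear least-squares cost `J(R,t,c)`. -/
def J {N K : ℕ} (y : Fin N → E3) (b : Fin K → Fin N → E3) (w : Fin N → ℝ) (lam : ℝ)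
    (R : Matrix (Fin 3) (Fin 3) ℝ) (t : E3) (c : Fin K → ℝ) : ℝ :=
  ∑ i, w i * ‖y i - mv R (∑ k, c k • b k i) - t‖ ^ 2 + lam * ‖toE c‖ ^ 2

lemma nsq {ι : Type} [Fintype ι] (x : EuclideanSpace ℝ ι) : ‖x‖^2 = ∑ i, x i ^ 2 := by
  rw [EuclideanSpace.norm_eq, Real.sq_sqrt (by positivity)]
  exact Finset.sum_congr rfl fun i _ => by rw [Real.norm_eq_abs, sq_abs]
lemma dp_sq {ι : Type} [Fintype ι] (v : ι → ℝ) : v ⬝ᵥ v = ∑ i, v i ^ 2 := by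
  simp [dotProduct, sq]
lemma nsqE (x : E3) : ‖x‖^2 = x ⬝ᵥ x := by rw [nsq, dp_sq]
lemma mv_add (R : Matrix (Fin 3) (Fin 3) ℝ) (u v : E3) : mv R (u + v) = mv R u + mv R v := by
  ext a; simp [mv, Matrix.mulVec_add]
lemma mv_smul (R : Matrix (Fin 3) (Fin 3) ℝ) (r : ℝ) (v : E3) : mv R (r • v) = r • mv R v := by
  ext a; simp [mv, Matrix.mulVec_smul]
lemma mv_sum {ι : Type} (s : Finset ι) (R : Matrix (Fin 3) (Fin 3) ℝ) (f : ι → E3) :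
    mv R (∑ i ∈ s, f i) = ∑ i ∈ s, mv R (f i) := by
  classical
  induction s using Finset.induction with
  | empty => ext a; simp [mv, Matrix.mulVec, dotProduct]
  | insert _ _ h ih => rw [Finset.sum_insert h, Finset.sum_insert h, mv_add, ih]
lemma E3_sum_apply {ι : Type} (s : Finset ι) (f : ι → E3) (a : Fin 3) :
    (∑ i ∈ s, f i) a = ∑ i ∈ s, f i a := by
  classical
  induction s using Finset.induction with
  | empty => rfl
  | insert _ _ h ih => rw [Finset.sum_insert h, Finset.sum_insert h, ← ih]; rfl
lemma E3_smul_apply (r : ℝ) (v : E3) (a : Fin 3) : (r • v) a = r * v a := rfl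
lemma E3_sub_apply (u v : E3) (a : Fin 3) : (u - v) a = u a - v a := rfl
lemma mv_zero (R : Matrix (Fin 3) (Fin 3) ℝ) : mv R (0 : E3) = 0 := by
  ext a; simp [mv]
lemma E3_mv_apply (R : Matrix (Fin 3) (Fin 3) ℝ) (v : E3) (a : Fin 3) :
    (mv R v) a = ∑ j, R a j * v j := by simp [mv, Matrix.mulVec, dotProduct]

lemma orth_norm (R : Matrix (Fin 3) (Fin 3) ℝ) (hRTR : Rᵀ * R = 1) (hRRT : R * Rᵀ = 1)
    (x v : Fin 3 → ℝ) :
    (x - R *ᵥ v) ⬝ᵥ (x - R *ᵥ v) = (Rᵀ *ᵥ x - v) ⬝ᵥ (Rᵀ *ᵥ x - v) := by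
  have key : ∀ u : Fin 3 → ℝ, (Rᵀ *ᵥ u) ⬝ᵥ (Rᵀ *ᵥ u) = u ⬝ᵥ u := by
    intro u
    rw [dotProduct_mulVec, Matrix.vecMul_transpose, Matrix.mulVec_mulVec, hRRT,
      Matrix.one_mulVec]
  have h2 : Rᵀ *ᵥ (x - R *ᵥ v) = Rᵀ *ᵥ x - v := by
    rw [Matrix.mulVec_sub, Matrix.mulVec_mulVec, hRTR, Matrix.one_mulVec]
  rw [← h2, key]

/-- Decomposition of the cost. -/
lemma decomp {N K : ℕ}
    (y : Fin N → E3) (b : Fin K → Fin N → E3) (w : Fin N → ℝ) (hw : ∀ i, 0 < w i)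
    (hwsum : 0 < ∑ i, w i) (lam : ℝ)
    (yw : E3) (hyw : yw = (∑ i, w i)⁻¹ • ∑ i, w i • y i)
    (bw : Fin K → E3) (hbw : ∀ k, bw k = (∑ i, w i)⁻¹ • ∑ i, w i • b k i)
    (ybarpt : Fin N → E3) (hybarpt : ∀ i, ybarpt i = Real.sqrt (w i) • (y i - yw))
    (bbar : Fin K → Fin N → E3)
    (hbbar : ∀ k i, bbar k i = Real.sqrt (w i) • (b k i - bw k))
    (ybar : Fin N × Fin 3 → ℝ) (hybar : ybar = fun p => entry (ybarpt p.1) p.2)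
    (B : Matrix (Fin N × Fin 3) (Fin K) ℝ) (hB : B = of fun p k => entry (bbar k p.1) p.2)
    (R : Matrix (Fin 3) (Fin 3) ℝ) (hR : SO3 R) (t : E3) (c : Fin K → ℝ) :
    J y b w lam R t c
      = ‖toE (B.mulVec c - ((1 : Matrix (Fin N) (Fin N) ℝ) ⊗ₖ Rᵀ).mulVec ybar)‖ ^ 2
          + lam * ‖toE c‖ ^ 2
        + (∑ i, w i) * ‖yw - mv R (∑ k, c k • bw k) - t‖ ^ 2 := by
  have hRTR : Rᵀ * R = 1 := hR.1
  have hRRT : R * Rᵀ = 1 := mul_eq_one_comm.mp hRTR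
  set S := ∑ i, w i with hS
  set A : Fin N → E3 := fun i => (y i - yw) - mv R (∑ k, c k • (b k i - bw k)) with hA
  set d : E3 := yw - mv R (∑ k, c k • bw k) - t with hd
  -- splitting of the residual
  have hsplit : ∀ i, y i - mv R (∑ k, c k • b k i) - t = A i + d := by
    intro i
    have hsum : (∑ k, c k • b k i) = (∑ k, c k • (b k i - bw k)) + ∑ k, c k • bw k := by
      rw [← Finset.sum_add_distrib]
      exact Finset.sum_congr rfl fun k _ => by rw [smul_sub, sub_add_cancel]
    rw [hsum, mv_add, hA, hd]
    beta_reduce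
    abel
  -- centered sums vanish
  have hy0 : ∑ i, w i • (y i - yw) = (0 : E3) := by
    have h1 : S • yw = ∑ i, w i • y i := by
      rw [hyw, smul_smul, mul_inv_cancel₀ hwsum.ne', one_smul]
    calc ∑ i, w i • (y i - yw) = (∑ i, w i • y i) - ∑ i, w i • yw := by
          rw [← Finset.sum_sub_distrib]
          exact Finset.sum_congr rfl fun i _ => smul_sub _ _ _
      _ = (∑ i, w i • y i) - S • yw := by rw [← Finset.sum_smul]
      _ = 0 := by rw [h1, sub_self]
  have hb0 : ∀ k, ∑ i, w i • (b k i - bw k) = (0 : E3) := by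
    intro k
    have h1 : S • bw k = ∑ i, w i • b k i := by
      rw [hbw k, smul_smul, mul_inv_cancel₀ hwsum.ne', one_smul]
    calc ∑ i, w i • (b k i - bw k) = (∑ i, w i • b k i) - ∑ i, w i • bw k := by
          rw [← Finset.sum_sub_distrib]
          exact Finset.sum_congr rfl fun i _ => smul_sub _ _ _
      _ = (∑ i, w i • b k i) - S • bw k := by rw [← Finset.sum_smul]
      _ = 0 := by rw [h1, sub_self]
  have hA0 : ∑ i, w i • A i = (0 : E3) := by
    have h2 : ∀ i, w i • A i
        = w i • (y i - yw) - mv R (∑ k, c k • (w i • (b k i - bw k))) := by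
      intro i
      have h2a : w i • mv R (∑ k, c k • (b k i - bw k))
          = mv R (∑ k, c k • (w i • (b k i - bw k))) := by
        rw [← mv_smul, Finset.smul_sum]
        exact congrArg (mv R)
          (Finset.sum_congr rfl fun k _ => smul_comm (w i) (c k) (b k i - bw k))
      rw [hA]
      simp only
      rw [smul_sub, h2a]
    calc ∑ i, w i • A i
        = ∑ i, (w i • (y i - yw) - mv R (∑ k, c k • (w i • (b k i - bw k)))) :=
          Finset.sum_congr rfl fun i _ => h2 i
      _ = (∑ i, w i • (y i - yw)) - ∑ i, mv R (∑ k, c k • (w i • (b k i - bw k))) := by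
          rw [Finset.sum_sub_distrib]
      _ = 0 - mv R (∑ i, ∑ k, c k • (w i • (b k i - bw k))) := by rw [hy0, ← mv_sum]
      _ = 0 := by
          rw [Finset.sum_comm]
          have h2b : ∀ k, (∑ i, c k • (w i • (b k i - bw k))) = (0 : E3) := fun k => by
            rw [← Finset.smul_sum, hb0 k, smul_zero]
          rw [Finset.sum_congr rfl fun k _ => h2b k, Finset.sum_const_zero, mv_zero, sub_zero]
  -- inner-product expansion
  have hinner : ∑ i, w i * (inner ℝ (A i) d) = 0 := by
    have h3 : ∀ i, w i * (inner ℝ (A i) d) = (inner ℝ (w i • A i) d) := fun i =>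
      (real_inner_smul_left _ _ _).symm
    rw [Finset.sum_congr rfl fun i _ => h3 i, ← sum_inner, hA0, inner_zero_left]
  have hexp : ∑ i, w i * ‖y i - mv R (∑ k, c k • b k i) - t‖ ^ 2
      = (∑ i, w i * ‖A i‖ ^ 2) + S * ‖d‖ ^ 2 := by
    have h3 : ∀ i, w i * ‖y i - mv R (∑ k, c k • b k i) - t‖ ^ 2
        = w i * ‖A i‖ ^ 2 + 2 * (w i * (inner ℝ (A i) d)) + w i * ‖d‖ ^ 2 := by
      intro i
      rw [hsplit i, norm_add_sq_real]
      ring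
    rw [Finset.sum_congr rfl fun i _ => h3 i, Finset.sum_add_distrib, Finset.sum_add_distrib,
      ← Finset.mul_sum, hinner, mul_zero, add_zero, ← Finset.sum_mul]
  -- rescale and rotate
  set vA : Fin N → E3 := fun i => ∑ k, c k • bbar k i with hvA
  have hwA : ∀ i, w i * ‖A i‖ ^ 2 = ‖ybarpt i - mv R (vA i)‖ ^ 2 := by
    intro i
    have h4 : Real.sqrt (w i) • A i = ybarpt i - mv R (vA i) := by
      rw [hA, hvA]
      simp only
      rw [smul_sub, ← hybarpt i, ← mv_smul, Finset.smul_sum]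
      refine congrArg (fun u => ybarpt i - mv R u) ?_
      refine Finset.sum_congr rfl fun k _ => ?_
      rw [smul_comm, ← hbbar]
    calc w i * ‖A i‖ ^ 2 = ‖Real.sqrt (w i) • A i‖ ^ 2 := by
          rw [norm_smul, mul_pow, Real.norm_eq_abs, sq_abs, Real.sq_sqrt (hw i).le]
      _ = _ := by rw [h4]
  have horth : ∀ i, ‖ybarpt i - mv R (vA i)‖ ^ 2
      = (fun a => (Rᵀ *ᵥ (ybarpt i)) a - vA i a) ⬝ᵥ (fun a => (Rᵀ *ᵥ (ybarpt i)) a - vA i a) := by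
    intro i
    have h5 := nsqE (ybarpt i - mv R (vA i))
    rw [h5]
    exact orth_norm R hRTR hRRT (ybarpt i) (vA i)
  -- stacking
  have hstack : ∑ i, (fun a => (Rᵀ *ᵥ (ybarpt i)) a - vA i a) ⬝ᵥ (fun a => (Rᵀ *ᵥ (ybarpt i)) a - vA i a)
      = ‖toE (B.mulVec c - ((1 : Matrix (Fin N) (Fin N) ℝ) ⊗ₖ Rᵀ).mulVec ybar)‖ ^ 2 := by
    rw [nsq, Fintype.sum_prod_type]
    refine Finset.sum_congr rfl fun i _ => ?_
    rw [dp_sq]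
    refine Finset.sum_congr rfl fun a _ => ?_
    have hBc : (B.mulVec c) (i, a) = vA i a := by
      rw [hB, hvA]
      simp only [Matrix.mulVec, dotProduct, of_apply, entry]
      rw [E3_sum_apply]
      exact Finset.sum_congr rfl fun k _ => by rw [E3_smul_apply]; ring
    have hzz : (((1 : Matrix (Fin N) (Fin N) ℝ) ⊗ₖ Rᵀ).mulVec ybar) (i, a)
        = (Rᵀ *ᵥ (ybarpt i)) a := by
      have e0 : (((1 : Matrix (Fin N) (Fin N) ℝ) ⊗ₖ Rᵀ).mulVec ybar) (i, a)
          = ∑ p : Fin N × Fin 3, ((1 : Matrix (Fin N) (Fin N) ℝ) ⊗ₖ Rᵀ) (i, a) p * ybar p := rfl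
      rw [e0, Fintype.sum_prod_type, Finset.sum_comm]
      have e1 : ∀ bb, (∑ j, ((1 : Matrix (Fin N) (Fin N) ℝ) ⊗ₖ Rᵀ) (i, a) (j, bb) * ybar (j, bb))
          = Rᵀ a bb * ybarpt i bb := by
        intro bb
        rw [Finset.sum_eq_single i]
        · rw [Matrix.kroneckerMap_apply, Matrix.one_apply_eq, one_mul, hybar]
          rfl
        · intro j _ hji
          rw [Matrix.kroneckerMap_apply, Matrix.one_apply_ne (Ne.symm hji), zero_mul, zero_mul]
        · intro h; exact absurd (Finset.mem_univ i) h
      rw [Finset.sum_congr rfl fun bb _ => e1 bb]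
      rfl
    simp only [toE, Pi.sub_apply]
    rw [hBc, hzz]
    ring
  -- assembling
  show (∑ i, w i * ‖y i - mv R (∑ k, c k • b k i) - t‖ ^ 2) + lam * ‖toE c‖ ^ 2 = _
  rw [hexp, Finset.sum_congr rfl fun i _ => (hwA i).trans (horth i), hstack, hd]
  ring

lemma nsq_dp {ι : Type} [Fintype ι] (v : ι → ℝ) : ‖toE v‖ ^ 2 = v ⬝ᵥ v := by
  rw [nsq, dp_sq]; rfl
lemma dp_self_nonneg {ι : Type} [Fintype ι] (v : ι → ℝ) : 0 ≤ v ⬝ᵥ v := by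
  rw [dp_sq]; positivity
lemma vecMulVec_mv {ι : Type} [Fintype ι] (a b v : ι → ℝ) :
    vecMulVec a b *ᵥ v = (b ⬝ᵥ v) • a := by
  funext i
  simp only [vecMulVec, mulVec, dotProduct, of_apply, Pi.smul_apply, smul_eq_mul, Finset.sum_mul,
    Finset.mul_sum]
  exact Finset.sum_congr rfl fun j _ => by ring
lemma vecMul_vecMulVec {ι : Type} [Fintype ι] (u a b : ι → ℝ) :
    u ᵥ* vecMulVec a b = (u ⬝ᵥ a) • b := by
  funext j
  simp only [vecMulVec, vecMul, dotProduct, of_apply, Pi.smul_apply, smul_eq_mul, Finset.sum_mul]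
  exact Finset.sum_congr rfl fun i _ => by ring
lemma vecMul_sub' {ι κ : Type} [Fintype ι] (u : ι → ℝ) (A C : Matrix ι κ ℝ) :
    u ᵥ* (A - C) = u ᵥ* A - u ᵥ* C := by
  funext j; simp [vecMul, dotProduct, Matrix.sub_apply, mul_sub, Finset.sum_sub_distrib]
lemma vecMul_smul' {ι κ : Type} [Fintype ι] (u : ι → ℝ) (r : ℝ) (A : Matrix ι κ ℝ) :
    u ᵥ* (r • A) = r • (u ᵥ* A) := by
  funext j; simp [vecMul, dotProduct, Finset.mul_sum]
  exact Finset.sum_congr rfl fun i _ => by ring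
lemma smul_vecMul' {ι κ : Type} [Fintype ι] (r : ℝ) (u : ι → ℝ) (A : Matrix ι κ ℝ) :
    (r • u) ᵥ* A = r • (u ᵥ* A) := by
  funext j; simp [vecMul, dotProduct, Finset.mul_sum]
  exact Finset.sum_congr rfl fun i _ => by ring

/-- Core quadratic optimality. -/
lemma quad_min {K : ℕ} (hK : 0 < K) {P : Type} [Fintype P]
    (B : Matrix P (Fin K) ℝ) (lam : ℝ) (hlam : 0 < lam) (z : P → ℝ)
    (Hbar : Matrix (Fin K) (Fin K) ℝ)
    (hHbar : Hbar = (2 : ℝ) • (Bᵀ * B + lam • (1 : Matrix (Fin K) (Fin K) ℝ)))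
    (ones : Fin K → ℝ) (hones : ones = fun _ => 1)
    (G : Matrix (Fin K) (Fin K) ℝ)
    (hG : G = Hbar⁻¹ -
      (ones ⬝ᵥ (Hbar⁻¹).mulVec ones)⁻¹ • (Hbar⁻¹ * vecMulVec ones ones * Hbar⁻¹))
    (g : Fin K → ℝ)
    (hg : g = (ones ⬝ᵥ (Hbar⁻¹).mulVec ones)⁻¹ • (Hbar⁻¹).mulVec ones)
    (cstar : Fin K → ℝ)
    (hcstar : cstar = (2 : ℝ) • G.mulVec (Bᵀ.mulVec z) + g) :
    (∑ k, cstar k = 1) ∧ ∀ c : Fin K → ℝ, ∑ k, c k = 1 →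
      (B *ᵥ cstar - z) ⬝ᵥ (B *ᵥ cstar - z) + lam * (cstar ⬝ᵥ cstar)
        ≤ (B *ᵥ c - z) ⬝ᵥ (B *ᵥ c - z) + lam * (c ⬝ᵥ c) := by
  have tdp : ∀ (v : P → ℝ) (d : Fin K → ℝ), (Bᵀ *ᵥ v) ⬝ᵥ d = v ⬝ᵥ (B *ᵥ d) := by
    intro v d; rw [Matrix.mulVec_transpose, ← dotProduct_mulVec]
  -- Hbar is positive definite
  have hPD : Hbar.PosDef := by
    refine Matrix.PosDef.of_dotProduct_mulVec_pos ?_ ?_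
    · rw [Matrix.IsHermitian, hHbar]
      ext i j
      simp only [conjTranspose_apply, Matrix.smul_apply, Matrix.add_apply, smul_eq_mul, mul_apply,
        transpose_apply, one_apply, star_trivial]
      rw [Finset.sum_congr rfl fun x _ => mul_comm (B x j) (B x i)]
      by_cases h : i = j
      · subst h; rfl
      · rw [if_neg h, if_neg (Ne.symm h)]
    · intro x hx
      have hsx : star x = x := by funext i; simp
      rw [hsx, hHbar, Matrix.smul_mulVec, Matrix.add_mulVec, Matrix.smul_mulVec,
        ← Matrix.mulVec_mulVec, Matrix.one_mulVec]
      rw [dotProduct_smul, dotProduct_add, dotProduct_smul,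
        dotProduct_comm x, tdp]
      have h1 : 0 ≤ (B *ᵥ x) ⬝ᵥ (B *ᵥ x) := dp_self_nonneg _
      have h2 : 0 < x ⬝ᵥ x := by
        rw [dp_sq]
        have hne : ∃ i, x i ≠ 0 := by
          by_contra h; push_neg at h; exact hx (funext h)
        obtain ⟨i, hi⟩ := hne
        exact Finset.sum_pos' (fun j _ => sq_nonneg _) ⟨i, Finset.mem_univ i, by positivity⟩
      simp only [smul_eq_mul]
      nlinarith
  have hUnit : IsUnit Hbar.det := (Matrix.isUnit_iff_isUnit_det _).mp hPD.isUnit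
  have HHinv : Hbar * Hbar⁻¹ = 1 := Matrix.mul_nonsing_inv _ hUnit
  have hPDinv : (Hbar⁻¹).PosDef := hPD.inv
  have honesne : ones ≠ 0 := by
    intro h
    have := congrFun h ⟨0, hK⟩
    rw [hones] at this
    simpa using this
  set α := ones ⬝ᵥ (Hbar⁻¹).mulVec ones with hα_def
  have hα : 0 < α := by
    have := hPDinv.dotProduct_mulVec_pos honesne
    have hsx : star ones = ones := by funext i; simp
    rwa [hsx] at this
  have hdm : (ones ᵥ* Hbar⁻¹) ⬝ᵥ ones = α := (dotProduct_mulVec _ _ _).symm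
  -- ones ᵥ* G = 0
  have h1G : ones ᵥ* G = 0 := by
    rw [hG, vecMul_sub', vecMul_smul', mul_assoc, ← Matrix.vecMul_vecMul,
      ← Matrix.vecMul_vecMul, _root_.vecMul_vecMulVec, hdm, smul_vecMul', smul_smul,
      inv_mul_cancel₀ hα.ne', one_smul, sub_self]
  have hsumdot : ∀ v : Fin K → ℝ, ∑ k, v k = ones ⬝ᵥ v := by
    intro v; rw [hones]; simp [dotProduct]
  have hog : ones ⬝ᵥ g = 1 := by
    rw [hg, dotProduct_smul, ← hα_def, smul_eq_mul, inv_mul_cancel₀ hα.ne']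
  have hsumc : ∑ k, cstar k = 1 := by
    rw [hsumdot, hcstar, dotProduct_add, dotProduct_smul,
      dotProduct_mulVec, h1G, zero_dotProduct, smul_zero, zero_add, hog]
  refine ⟨hsumc, ?_⟩
  -- KKT
  have hHG : Hbar * G = 1 - (ones ⬝ᵥ (Hbar⁻¹).mulVec ones)⁻¹ • (vecMulVec ones ones * Hbar⁻¹) := by
    rw [hG, Matrix.mul_sub, HHinv, Matrix.mul_smul, ← Matrix.mul_assoc, ← Matrix.mul_assoc,
      HHinv, Matrix.one_mul]
  have hKKT : ∃ ν : ℝ, Hbar *ᵥ cstar = (2 : ℝ) • (Bᵀ *ᵥ z) + ν • ones := by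
    refine ⟨α⁻¹ * (1 - 2 * (ones ⬝ᵥ (Hbar⁻¹ *ᵥ (Bᵀ *ᵥ z)))), ?_⟩
    rw [hcstar, Matrix.mulVec_add, Matrix.mulVec_smul,
      Matrix.mulVec_mulVec (Bᵀ *ᵥ z) Hbar G, hHG,
      Matrix.sub_mulVec, Matrix.one_mulVec, Matrix.smul_mulVec,
      ← Matrix.mulVec_mulVec (Bᵀ *ᵥ z) (vecMulVec ones ones) Hbar⁻¹,
      vecMulVec_mv, hg, Matrix.mulVec_smul, Matrix.mulVec_mulVec ones Hbar Hbar⁻¹, HHinv,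
      Matrix.one_mulVec]
    funext k
    simp only [Pi.add_apply, Pi.smul_apply, Pi.sub_apply, smul_eq_mul]
    ring
  obtain ⟨ν, hν⟩ := hKKT
  intro c hc
  set d := c - cstar with hd
  have hcd : c = cstar + d := by funext k; simp only [hd, Pi.add_apply, Pi.sub_apply]; ring
  have hod : ones ⬝ᵥ d = 0 := by
    rw [hd, dotProduct_sub, ← hsumdot, ← hsumdot, hc, hsumc, sub_self]
  -- expansion
  have hBc : B *ᵥ c = B *ᵥ cstar + B *ᵥ d := by rw [hcd, Matrix.mulVec_add]
  set a := B *ᵥ cstar - z with ha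
  set e := B *ᵥ d with he
  have hae : B *ᵥ c - z = a + e := by
    rw [hBc, ha, he]; funext p
    simp only [Pi.add_apply, Pi.sub_apply]; ring
  have hlin : a ⬝ᵥ e + lam * (cstar ⬝ᵥ d) = (ν / 2) * (ones ⬝ᵥ d) := by
    have h1 : (Hbar *ᵥ cstar) ⬝ᵥ d = 2 * ((B *ᵥ cstar) ⬝ᵥ e + lam * (cstar ⬝ᵥ d)) := by
      rw [hHbar, Matrix.smul_mulVec, Matrix.add_mulVec, Matrix.smul_mulVec,
        ← Matrix.mulVec_mulVec cstar Bᵀ B, Matrix.one_mulVec, smul_dotProduct,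
        add_dotProduct, smul_dotProduct, tdp, he]
      simp only [smul_eq_mul]
    have h2 : ((2 : ℝ) • (Bᵀ *ᵥ z) + ν • ones) ⬝ᵥ d = 2 * (z ⬝ᵥ e) + ν * (ones ⬝ᵥ d) := by
      rw [add_dotProduct, smul_dotProduct, smul_dotProduct, tdp, he]
      simp only [smul_eq_mul]
    rw [hν, h2] at h1
    have h3 : a ⬝ᵥ e = (B *ᵥ cstar) ⬝ᵥ e - z ⬝ᵥ e := by rw [ha, sub_dotProduct]
    rw [h3]; linarith
  rw [hod, mul_zero] at hlin
  have hexp : (B *ᵥ c - z) ⬝ᵥ (B *ᵥ c - z) + lam * (c ⬝ᵥ c)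
      = (a ⬝ᵥ a + lam * (cstar ⬝ᵥ cstar)) + 2 * (a ⬝ᵥ e + lam * (cstar ⬝ᵥ d))
        + (e ⬝ᵥ e + lam * (d ⬝ᵥ d)) := by
    rw [hae, hcd, add_dotProduct, dotProduct_add, dotProduct_add,
      add_dotProduct, dotProduct_add, dotProduct_add,
      dotProduct_comm e a, dotProduct_comm d cstar]
    ring
  rw [hexp, hlin]
  have h3 : 0 ≤ e ⬝ᵥ e := dp_self_nonneg _
  have h4 : 0 ≤ d ⬝ᵥ d := dp_self_nonneg _
  nlinarith

/-- optimality of `PACE⋆`: if `R*` globally minimizes the reduced rotation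
cost `F` over `SO(3)`, `c*` is the closed-form optimal shape for `R*`, and `t*` is the
closed-form optimal translation for `(R*, c*)`, then `(R*, t*, c*)` globally minimizes the
full cost `J` over `SO(3) × ℝ³ × {c : 𝟏ᵀc = 1}`. -/
theorem pace_star_global_optimality (N K : ℕ) (hK : 0 < K)
    (y : Fin N → E3) (b : Fin K → Fin N → E3)
    (w : Fin N → ℝ) (hw : ∀ i, 0 < w i) (hwsum : 0 < ∑ i, w i)
    (lam : ℝ) (hlam : 0 < lam)
    (yw : E3) (hyw : yw = (∑ i, w i)⁻¹ • ∑ i, w i • y i)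
    (bw : Fin K → E3) (hbw : ∀ k, bw k = (∑ i, w i)⁻¹ • ∑ i, w i • b k i)
    (ybarpt : Fin N → E3) (hybarpt : ∀ i, ybarpt i = Real.sqrt (w i) • (y i - yw))
    (bbar : Fin K → Fin N → E3)
    (hbbar : ∀ k i, bbar k i = Real.sqrt (w i) • (b k i - bw k))
    (ybar : Fin N × Fin 3 → ℝ) (hybar : ybar = fun p => entry (ybarpt p.1) p.2)
    (B : Matrix (Fin N × Fin 3) (Fin K) ℝ) (hB : B = of fun p k => entry (bbar k p.1) p.2)
    (F : Matrix (Fin 3) (Fin 3) ℝ → ℝ)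
    (hF : ∀ R, F R = sInf {v : ℝ | ∃ c : Fin K → ℝ, ∑ k, c k = 1 ∧
      v = ‖toE (B.mulVec c - ((1 : Matrix (Fin N) (Fin N) ℝ) ⊗ₖ Rᵀ).mulVec ybar)‖ ^ 2
            + lam * ‖toE c‖ ^ 2})
    (Hbar : Matrix (Fin K) (Fin K) ℝ)
    (hHbar : Hbar = (2 : ℝ) • (Bᵀ * B + lam • (1 : Matrix (Fin K) (Fin K) ℝ)))
    (ones : Fin K → ℝ) (hones : ones = fun _ => 1)
    (G : Matrix (Fin K) (Fin K) ℝ)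
    (hG : G = Hbar⁻¹ -
      (ones ⬝ᵥ (Hbar⁻¹).mulVec ones)⁻¹ • (Hbar⁻¹ * vecMulVec ones ones * Hbar⁻¹))
    (g : Fin K → ℝ)
    (hg : g = (ones ⬝ᵥ (Hbar⁻¹).mulVec ones)⁻¹ • (Hbar⁻¹).mulVec ones)
    (Rstar : Matrix (Fin 3) (Fin 3) ℝ) (hRstarSO3 : SO3 Rstar)
    (hRstarOpt : ∀ R, SO3 R → F Rstar ≤ F R)
    (cstar : Fin K → ℝ)
    (hcstar : cstar = (2 : ℝ) • G.mulVec
      (Bᵀ.mulVec (((1 : Matrix (Fin N) (Fin N) ℝ) ⊗ₖ Rstarᵀ).mulVec ybar)) + g)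
    (tstar : E3) (htstar : tstar = yw - mv Rstar (∑ k, cstar k • bw k)) :
    ∑ k, cstar k = 1 ∧
      ∀ (R : Matrix (Fin 3) (Fin 3) ℝ) (t : E3) (c : Fin K → ℝ),
        SO3 R → ∑ k, c k = 1 →
        J y b w lam Rstar tstar cstar ≤ J y b w lam R t c := by
  classical
  -- the reduced quadratic objective
  have hquad := quad_min hK B lam hlam
    (((1 : Matrix (Fin N) (Fin N) ℝ) ⊗ₖ Rstarᵀ).mulVec ybar) Hbar hHbar ones hones G hG g hg
    cstar hcstar
  obtain ⟨hsumc, hmin⟩ := hquad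
  -- rewrite the quadratic objective with norms
  have hqnorm : ∀ (R : Matrix (Fin 3) (Fin 3) ℝ) (c : Fin K → ℝ),
      ‖toE (B.mulVec c - ((1 : Matrix (Fin N) (Fin N) ℝ) ⊗ₖ Rᵀ).mulVec ybar)‖ ^ 2
          + lam * ‖toE c‖ ^ 2
        = (B.mulVec c - ((1 : Matrix (Fin N) (Fin N) ℝ) ⊗ₖ Rᵀ).mulVec ybar)
            ⬝ᵥ (B.mulVec c - ((1 : Matrix (Fin N) (Fin N) ℝ) ⊗ₖ Rᵀ).mulVec ybar)
          + lam * (c ⬝ᵥ c) := by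
    intro R c
    rw [nsq_dp, nsq_dp]
  refine ⟨hsumc, ?_⟩
  intro R t c hRso hc
  -- bounded below and nonempty
  have hbdd : ∀ R0 : Matrix (Fin 3) (Fin 3) ℝ, BddBelow {v : ℝ | ∃ c0 : Fin K → ℝ,
      ∑ k, c0 k = 1 ∧
      v = ‖toE (B.mulVec c0 - ((1 : Matrix (Fin N) (Fin N) ℝ) ⊗ₖ R0ᵀ).mulVec ybar)‖ ^ 2
            + lam * ‖toE c0‖ ^ 2} := by
    intro R0
    refine ⟨0, ?_⟩
    rintro v ⟨c0, hc0, rfl⟩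
    positivity
  have hmem : ∀ (R0 : Matrix (Fin 3) (Fin 3) ℝ) (c0 : Fin K → ℝ), ∑ k, c0 k = 1 →
      (‖toE (B.mulVec c0 - ((1 : Matrix (Fin N) (Fin N) ℝ) ⊗ₖ R0ᵀ).mulVec ybar)‖ ^ 2
          + lam * ‖toE c0‖ ^ 2) ∈ {v : ℝ | ∃ c1 : Fin K → ℝ, ∑ k, c1 k = 1 ∧
        v = ‖toE (B.mulVec c1 - ((1 : Matrix (Fin N) (Fin N) ℝ) ⊗ₖ R0ᵀ).mulVec ybar)‖ ^ 2
              + lam * ‖toE c1‖ ^ 2} := by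
    intro R0 c0 hc0
    exact ⟨c0, hc0, rfl⟩
  -- F R ≤ value of the reduced objective at any feasible c
  have hFle : ∀ (R0 : Matrix (Fin 3) (Fin 3) ℝ) (c0 : Fin K → ℝ), ∑ k, c0 k = 1 →
      F R0 ≤ ‖toE (B.mulVec c0 - ((1 : Matrix (Fin N) (Fin N) ℝ) ⊗ₖ R0ᵀ).mulVec ybar)‖ ^ 2
          + lam * ‖toE c0‖ ^ 2 := by
    intro R0 c0 hc0
    rw [hF]
    exact csInf_le (hbdd R0) (hmem R0 c0 hc0)
  -- F Rstar equals the value at cstar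
  have hFeq : F Rstar
      = ‖toE (B.mulVec cstar - ((1 : Matrix (Fin N) (Fin N) ℝ) ⊗ₖ Rstarᵀ).mulVec ybar)‖ ^ 2
          + lam * ‖toE cstar‖ ^ 2 := by
    refine le_antisymm (hFle Rstar cstar hsumc) ?_
    rw [hF]
    refine le_csInf ⟨_, hmem Rstar cstar hsumc⟩ ?_
    rintro v ⟨c0, hc0, rfl⟩
    rw [hqnorm, hqnorm]
    exact hmin c0 hc0
  -- decomposition at the optimum
  have hdec1 : J y b w lam Rstar tstar cstar
      = ‖toE (B.mulVec cstar - ((1 : Matrix (Fin N) (Fin N) ℝ) ⊗ₖ Rstarᵀ).mulVec ybar)‖ ^ 2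
          + lam * ‖toE cstar‖ ^ 2 := by
    rw [decomp y b w hw hwsum lam yw hyw bw hbw ybarpt hybarpt bbar hbbar ybar hybar B hB
      Rstar hRstarSO3 tstar cstar]
    have h0 : yw - mv Rstar (∑ k, cstar k • bw k) - tstar = 0 := by
      rw [htstar]; abel
    rw [h0, norm_zero]
    ring
  -- decomposition at an arbitrary feasible point
  have hdec2 : J y b w lam R t c
      = ‖toE (B.mulVec c - ((1 : Matrix (Fin N) (Fin N) ℝ) ⊗ₖ Rᵀ).mulVec ybar)‖ ^ 2
          + lam * ‖toE c‖ ^ 2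
        + (∑ i, w i) * ‖yw - mv R (∑ k, c k • bw k) - t‖ ^ 2 :=
    decomp y b w hw hwsum lam yw hyw bw hbw ybarpt hybarpt bbar hbbar ybar hybar B hB
      R hRso t c
  have hnn : 0 ≤ (∑ i, w i) * ‖yw - mv R (∑ k, c k • bw k) - t‖ ^ 2 :=
    mul_nonneg hwsum.le (sq_nonneg _)
  calc J y b w lam Rstar tstar cstar
      = ‖toE (B.mulVec cstar - ((1 : Matrix (Fin N) (Fin N) ℝ) ⊗ₖ Rstarᵀ).mulVec ybar)‖ ^ 2
          + lam * ‖toE cstar‖ ^ 2 := hdec1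
    _ = F Rstar := hFeq.symm
    _ ≤ F R := hRstarOpt R hRso
    _ ≤ ‖toE (B.mulVec c - ((1 : Matrix (Fin N) (Fin N) ℝ) ⊗ₖ Rᵀ).mulVec ybar)‖ ^ 2
          + lam * ‖toE c‖ ^ 2 := hFle R c hc
    _ ≤ J y b w lam R t c := by rw [hdec2]; linarith

end
end
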